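/- arXiv:2103.01407 — 2 statements merged into one kernel-verified Lean document; each statement's English description precedes it below -/
import Mathlib

section
/- Let T be the tree obtained from j+1 disjoint copies of P₃ (j ≥ 0) by fixing a leaf v_e in one copy and joining v_e by an edge to a leaf of each of the other j copies. Then ψ(T) = 2j + 2. -/
open Finset

variable {V : Type*} [Fintype V] [DecidableEq V]

/-- `F` is a dissociation set: it induces a subgraph of maximum degree at most 1,
i.e. every vertex of `F` has at most one neighbor in `F`. -/
def IsDissoc (G : SimpleGraph V) (F : Finset V) : Prop :=
  ∀ v ∈ F, ∀ u ∈ F, ∀ w ∈ F, G.Adj v u → G.Adj v w → u = w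

open Classical in
/-- The dissociation number: maximum cardinality of a dissociation set. -/
noncomputable def dissocNum (G : SimpleGraph V) : ℕ :=
  (Finset.univ.filter fun F : Finset V => IsDissoc G F).sup Finset.card

/-- A maximum dissociation set. -/
def IsMaxDissoc (G : SimpleGraph V) (F : Finset V) : Prop :=
  IsDissoc G F ∧ F.card = dissocNum G

open Classical in
/-- The number of maximum dissociation sets. -/
noncomputable def numMaxDissoc (G : SimpleGraph V) : ℕ :=
  (Finset.univ.filter fun F : Finset V => IsMaxDissoc G F).card

/-- Vertices of the tree built from `(j+1)P₃`: the fixed path `c 0 – c 1 – c 2`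
(with leaf `v_e = c 0`) and `j` paths `p i 0 – p i 1 – p i 2`. -/
inductive T2V (j : ℕ)
  | c : Fin 3 → T2V j
  | p : Fin j → Fin 3 → T2V j
  deriving DecidableEq, Fintype

/-- The tree obtained from `(j+1)P₃` by joining the leaf `c 0` of the fixed `P₃`
to the leaf `p i 0` of each of the other `j` copies. -/
def T2 (j : ℕ) : SimpleGraph (T2V j) :=
  SimpleGraph.fromRel fun x y =>
    (x = T2V.c 0 ∧ y = T2V.c 1) ∨ (x = T2V.c 1 ∧ y = T2V.c 2) ∨
    (∃ i, x = T2V.c 0 ∧ y = T2V.p i 0) ∨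
    (∃ i, x = T2V.p i 0 ∧ y = T2V.p i 1) ∨
    (∃ i, x = T2V.p i 1 ∧ y = T2V.p i 2)

lemma adj_c1_c0 (j : ℕ) : (T2 j).Adj (T2V.c 1) (T2V.c 0) := by
  simp [T2, SimpleGraph.fromRel_adj]

lemma adj_c1_c2 (j : ℕ) : (T2 j).Adj (T2V.c 1) (T2V.c 2) := by
  simp [T2, SimpleGraph.fromRel_adj]

lemma adj_p1_p0 (j : ℕ) (i : Fin j) : (T2 j).Adj (T2V.p i 1) (T2V.p i 0) := by
  simp [T2, SimpleGraph.fromRel_adj]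

lemma adj_p1_p2 (j : ℕ) (i : Fin j) : (T2 j).Adj (T2V.p i 1) (T2V.p i 2) := by
  simp [T2, SimpleGraph.fromRel_adj]

def Fset (j : ℕ) : Finset (T2V j) :=
  insert (T2V.c 1) (insert (T2V.c 2)
    ((Finset.univ : Finset (Fin j)).biUnion fun i => {T2V.p i 1, T2V.p i 2}))

lemma mem_Fset {j : ℕ} (v : T2V j) :
    v ∈ Fset j ↔ v = T2V.c 1 ∨ v = T2V.c 2 ∨ ∃ i, v = T2V.p i 1 ∨ v = T2V.p i 2 := by
  simp [Fset]

lemma Fset_card (j : ℕ) : (Fset j).card = 2 * j + 2 := by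
  rw [Fset]
  rw [Finset.card_insert_of_notMem (by simp), Finset.card_insert_of_notMem (by simp)]
  rw [Finset.card_biUnion]
  · simp [Finset.card_pair]; ring
  · intro a _ b _ hab
    simp only [Finset.disjoint_left, Finset.mem_insert, Finset.mem_singleton]
    rintro x (rfl|rfl) (h|h) <;> simp_all

lemma Fset_dissoc (j : ℕ) : IsDissoc (T2 j) (Fset j) := by
  intro v hv u hu w hw hvu hvw
  rw [mem_Fset] at hv hu hw
  simp only [T2, SimpleGraph.fromRel_adj, T2V.c.injEq, T2V.p.injEq] at hvu hvw
  obtain ⟨-, hvu⟩ := hvu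
  obtain ⟨-, hvw⟩ := hvw
  rcases hv with rfl|rfl|⟨i,rfl|rfl⟩ <;>
    rcases hvu with (⟨h1,h2⟩|⟨h1,h2⟩|⟨k,h1,h2⟩|⟨k,h1,h2⟩|⟨k,h1,h2⟩)|(⟨h1,h2⟩|⟨h1,h2⟩|⟨k,h1,h2⟩|⟨k,h1,h2⟩|⟨k,h1,h2⟩) <;>
    rcases hvw with (⟨g1,g2⟩|⟨g1,g2⟩|⟨l,g1,g2⟩|⟨l,g1,g2⟩|⟨l,g1,g2⟩)|(⟨g1,g2⟩|⟨g1,g2⟩|⟨l,g1,g2⟩|⟨l,g1,g2⟩|⟨l,g1,g2⟩) <;>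
    simp_all

lemma triple_le {G : SimpleGraph V} {F : Finset V} (hF : IsDissoc G F)
    {a m b : V} (hab : a ≠ b) (h1 : G.Adj m a) (h2 : G.Adj m b)
    {s : Finset V} (hsF : s ⊆ F) (hsub : s ⊆ {a, m, b}) : s.card ≤ 2 := by
  by_contra h
  push_neg at h
  have hcard : ({a, m, b} : Finset V).card ≤ s.card := by
    calc ({a, m, b} : Finset V).card ≤ 3 := by
          apply le_trans (Finset.card_insert_le _ _)
          simp [Finset.card_insert_le]
          exact Nat.lt_succ_of_le (Finset.card_insert_le _ _)
      _ ≤ s.card := h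
  have hs : s = {a, m, b} := Finset.eq_of_subset_of_card_le hsub hcard
  have ha : a ∈ F := hsF (by simp [hs])
  have hm : m ∈ F := hsF (by simp [hs])
  have hb : b ∈ F := hsF (by simp [hs])
  exact hab (hF m hm a ha b hb h1 h2)

open Classical in
lemma dissoc_card_le (j : ℕ) (F : Finset (T2V j)) (hF : IsDissoc (T2 j) F) :
    F.card ≤ 2 * j + 2 := by
  classical
  have key : F.card = ∑ k : Option (Fin j),
      (F.filter fun v => (match v with | T2V.c _ => none | T2V.p i _ => some i) = k).card := by
    apply Finset.card_eq_sum_card_fiberwise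
    intro x _; exact Finset.mem_univ _
  rw [key]
  have hle : ∀ k : Option (Fin j),
      (F.filter fun v => (match v with | T2V.c _ => none | T2V.p i _ => some i) = k).card ≤ 2 := by
    intro k
    match k with
    | none =>
        apply triple_le hF (a := T2V.c 0) (m := T2V.c 1) (b := T2V.c 2)
          (by simp) ((adj_c1_c0 j)) (adj_c1_c2 j) (Finset.filter_subset _ _)
        intro x hx
        simp only [Finset.mem_filter] at hx
        match x, hx with
        | T2V.c i, _ => fin_cases i <;> simp
        | T2V.p i a, ⟨_, h⟩ => simp at h
    | some i =>
        apply triple_le hF (a := T2V.p i 0) (m := T2V.p i 1) (b := T2V.p i 2)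
          (by simp) (adj_p1_p0 j i) (adj_p1_p2 j i) (Finset.filter_subset _ _)
        intro x hx
        simp only [Finset.mem_filter] at hx
        match x, hx with
        | T2V.c a, ⟨_, h⟩ => simp at h
        | T2V.p i' a, ⟨_, h⟩ =>
            simp at h
            subst h
            fin_cases a <;> simp
  calc ∑ k : Option (Fin j), _ ≤ ∑ _k : Option (Fin j), 2 := Finset.sum_le_sum fun k _ => hle k
    _ = 2 * j + 2 := by simp [Finset.card_univ, mul_comm]; ring

/-- The tree `T2 j` has dissociation number `2j + 2`. -/
theorem stmt_10 (j : ℕ) : dissocNum (T2 j) = 2 * j + 2 := by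
  classical
  apply le_antisymm
  · apply Finset.sup_le
    intro F hF
    simp only [Finset.mem_filter] at hF
    exact dissoc_card_le j F hF.2
  · have h : Fset j ∈ Finset.univ.filter fun F : Finset (T2V j) => IsDissoc (T2 j) F := by
      simp [Fset_dissoc]
    calc 2 * j + 2 = (Fset j).card := (Fset_card j).symm
      _ ≤ dissocNum (T2 j) := Finset.le_sup h
end

section
/- Let T be a tree and s a vertex of T such that every maximum dissociation set F of T contains s and s has exactly one neighbor in F. Then there exists a neighbor t of s that belongs to every maximum dissociation set of T. -/
open Finset

variable {V : Type*} [Fintype V] [DecidableEq V]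

lemma exists_maxDissoc (G : SimpleGraph V) : ∃ F : Finset V, IsMaxDissoc G F := by
  classical
  have hne : (Finset.univ.filter fun F : Finset V => IsDissoc G F).Nonempty :=
    ⟨∅, Finset.mem_filter.2 ⟨Finset.mem_univ _, by simp [IsDissoc]⟩⟩
  obtain ⟨F, hF, hsup⟩ := Finset.exists_mem_eq_sup _ hne Finset.card
  exact ⟨F, (Finset.mem_filter.1 hF).2, by rw [dissocNum, hsup]⟩

lemma card_le_dissocNum (G : SimpleGraph V) {F : Finset V} (hF : IsDissoc G F) :
    F.card ≤ dissocNum G := by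
  classical
  exact Finset.le_sup (Finset.mem_filter.2 ⟨Finset.mem_univ _, hF⟩)

/-- Reachability avoiding a vertex `s`. -/
def Reach (G : SimpleGraph V) (s a b : V) : Prop := ∃ p : G.Walk a b, s ∉ p.support

/-- If every maximum dissociation set `F` of a tree contains `s` and contains exactly one
neighbor of `s`, then some neighbor `t` of `s` belongs to every maximum dissociation set. -/
theorem stmt_18 (G : SimpleGraph V) (hT : G.IsTree) (s : V)
    (h : ∀ F : Finset V, IsMaxDissoc G F → s ∈ F ∧ ∃! u, u ∈ F ∧ G.Adj s u) :
    ∃ t, G.Adj s t ∧ ∀ F : Finset V, IsMaxDissoc G F → t ∈ F := by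
  classical
  by_contra hcon
  push_neg at hcon
  set n := dissocNum G with hn
  obtain ⟨F1, hF1⟩ := exists_maxDissoc G
  obtain ⟨hsF1, t1, ⟨ht1F1, hst1⟩, ht1uniq⟩ := h F1 hF1
  obtain ⟨F2, hF2, ht1F2⟩ := hcon t1 hst1
  obtain ⟨hsF2, t2, ⟨ht2F2, hst2⟩, ht2uniq⟩ := h F2 hF2
  -- S1 : vertices reachable from t1 avoiding s
  set S1 : Finset V := Finset.univ.filter (fun v => Reach G s t1 v) with hS1def
  have hmemS1 : ∀ v, v ∈ S1 ↔ Reach G s t1 v := by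
    intro v; simp [hS1def]
  have ht1S1 : t1 ∈ S1 := by
    rw [hmemS1]
    exact ⟨SimpleGraph.Walk.nil, by simp [hst1.ne]⟩
  have hsS1 : s ∉ S1 := by
    rw [hmemS1]
    rintro ⟨p, hp⟩
    exact hp p.end_mem_support
  have hadjS1 : ∀ v ∈ S1, ∀ w, G.Adj v w → w ≠ s → w ∈ S1 := by
    intro v hv w hvw hws
    rw [hmemS1] at hv ⊢
    obtain ⟨p, hp⟩ := hv
    refine ⟨p.concat hvw, ?_⟩
    rw [SimpleGraph.Walk.support_concat]
    simp only [List.concat_eq_append, List.mem_append, List.mem_singleton]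
    rintro (hs | hs)
    · exact hp hs
    · exact hws hs.symm
  have huniq : ∀ v ∈ S1, G.Adj s v → v = t1 := by
    intro v hv hsv
    by_contra hvt1
    rw [hmemS1] at hv
    obtain ⟨p, hp⟩ := hv
    have hq : s ∉ p.toPath.1.support := fun hs => hp (p.support_toPath_subset hs)
    have hr : (SimpleGraph.Walk.cons hst1.symm
        (SimpleGraph.Walk.cons hsv SimpleGraph.Walk.nil) : G.Walk t1 v).IsPath := by
      simp [SimpleGraph.Walk.isPath_def]
      refine ⟨⟨hst1.ne', fun hv => hvt1 hv.symm⟩, hsv.ne⟩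
    have := hT.IsAcyclic.path_unique p.toPath ⟨_, hr⟩
    rw [this] at hq
    simp at hq
  have ht2S1 : t2 ∉ S1 := by
    intro hmem
    exact ht1F2 ((huniq t2 hmem hst2) ▸ ht2F2)
  -- the two exchanged sets
  set A : Finset V := (F1 ∩ S1) ∪ (F2 \ S1) with hAdef
  set B : Finset V := (F2 ∩ S1) ∪ (F1 \ S1) with hBdef
  have hdisj1 : Disjoint (F1 ∩ S1) (F2 \ S1) := by
    rw [Finset.disjoint_left]
    intro a ha hb
    exact (Finset.mem_sdiff.1 hb).2 (Finset.mem_inter.1 ha).2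
  have hdisj2 : Disjoint (F2 ∩ S1) (F1 \ S1) := by
    rw [Finset.disjoint_left]
    intro a ha hb
    exact (Finset.mem_sdiff.1 hb).2 (Finset.mem_inter.1 ha).2
  have hcards : A.card + B.card = 2 * n := by
    rw [hAdef, hBdef, Finset.card_union_of_disjoint hdisj1,
      Finset.card_union_of_disjoint hdisj2]
    have h1 := Finset.card_inter_add_card_sdiff F1 S1
    have h2 := Finset.card_inter_add_card_sdiff F2 S1
    have e1 : F1.card = n := hF1.2
    have e2 : F2.card = n := hF2.2
    omega
  -- B is a dissociation set
  have hBmem1 : ∀ v ∈ F2 ∩ S1, ∀ u ∈ B, G.Adj v u → u ∈ F2 ∩ S1 := by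
    intro v hv u hu hvu
    rcases Finset.mem_union.1 hu with hu | hu
    · exact hu
    · exfalso
      have hus : u = s := by
        by_contra hus
        exact (Finset.mem_sdiff.1 hu).2 (hadjS1 v (Finset.mem_inter.1 hv).2 u hvu hus)
      subst hus
      have : v = t1 := huniq v (Finset.mem_inter.1 hv).2 hvu.symm
      exact ht1F2 (this ▸ (Finset.mem_inter.1 hv).1)
  have hBmem2 : ∀ v ∈ F1 \ S1, ∀ u ∈ B, G.Adj v u → u ∈ F1 \ S1 := by
    intro v hv u hu hvu
    rcases Finset.mem_union.1 hu with hu | hu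
    · exfalso
      have hvs : v = s := by
        by_contra hvs
        exact (Finset.mem_sdiff.1 hv).2 (hadjS1 u (Finset.mem_inter.1 hu).2 v hvu.symm hvs)
      subst hvs
      have : u = t1 := huniq u (Finset.mem_inter.1 hu).2 hvu
      exact ht1F2 (this ▸ (Finset.mem_inter.1 hu).1)
    · exact hu
  have hBdis : IsDissoc G B := by
    intro v hv u hu w hw hvu hvw
    rcases Finset.mem_union.1 hv with hv | hv
    · have hu' := hBmem1 v hv u hu hvu
      have hw' := hBmem1 v hv w hw hvw
      exact hF2.1 v (Finset.mem_inter.1 hv).1 u (Finset.mem_inter.1 hu').1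
        w (Finset.mem_inter.1 hw').1 hvu hvw
    · have hu' := hBmem2 v hv u hu hvu
      have hw' := hBmem2 v hv w hw hvw
      exact hF1.1 v (Finset.mem_sdiff.1 hv).1 u (Finset.mem_sdiff.1 hu').1
        w (Finset.mem_sdiff.1 hw').1 hvu hvw
  -- A.erase s is a dissociation set
  have hAmem1 : ∀ v ∈ F1 ∩ S1, ∀ u ∈ A.erase s, G.Adj v u → u ∈ F1 ∩ S1 := by
    intro v hv u hu hvu
    rcases Finset.mem_union.1 (Finset.mem_of_mem_erase hu) with hu' | hu'
    · exact hu'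
    · exfalso
      exact (Finset.mem_sdiff.1 hu').2
        (hadjS1 v (Finset.mem_inter.1 hv).2 u hvu (Finset.ne_of_mem_erase hu))
  have hAmem2 : ∀ v ∈ F2 \ S1, v ≠ s → ∀ u ∈ A.erase s, G.Adj v u → u ∈ F2 \ S1 := by
    intro v hv hvs u hu hvu
    rcases Finset.mem_union.1 (Finset.mem_of_mem_erase hu) with hu' | hu'
    · exfalso
      exact (Finset.mem_sdiff.1 hv).2 (hadjS1 u (Finset.mem_inter.1 hu').2 v hvu.symm hvs)
    · exact hu'
  have hAdis : IsDissoc G (A.erase s) := by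
    intro v hv u hu w hw hvu hvw
    rcases Finset.mem_union.1 (Finset.mem_of_mem_erase hv) with hv' | hv'
    · have hu' := hAmem1 v hv' u hu hvu
      have hw' := hAmem1 v hv' w hw hvw
      exact hF1.1 v (Finset.mem_inter.1 hv').1 u (Finset.mem_inter.1 hu').1
        w (Finset.mem_inter.1 hw').1 hvu hvw
    · have hu' := hAmem2 v hv' (Finset.ne_of_mem_erase hv) u hu hvu
      have hw' := hAmem2 v hv' (Finset.ne_of_mem_erase hv) w hw hvw
      exact hF2.1 v (Finset.mem_sdiff.1 hv').1 u (Finset.mem_sdiff.1 hu').1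
        w (Finset.mem_sdiff.1 hw').1 hvu hvw
  -- cardinality bounds
  have hsA : s ∈ A := Finset.mem_union.2 (Or.inr (Finset.mem_sdiff.2 ⟨hsF2, hsS1⟩))
  have hAcarderase : (A.erase s).card = A.card - 1 := Finset.card_erase_of_mem hsA
  have hApos : 1 ≤ A.card := Finset.card_pos.2 ⟨s, hsA⟩
  have hB_le : B.card ≤ n := card_le_dissocNum G hBdis
  have hAe_le : (A.erase s).card ≤ n := card_le_dissocNum G hAdis
  have hAe_ne : (A.erase s).card ≠ n := by
    intro heq
    exact (Finset.notMem_erase s A) ((h (A.erase s) ⟨hAdis, heq⟩).1)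
  have hBcard : B.card = n := by omega
  -- B is a maximum dissociation set in which s has no neighbor: contradiction
  obtain ⟨hsB, u, ⟨huB, hsu⟩, _⟩ := h B ⟨hBdis, hBcard⟩
  rcases Finset.mem_union.1 huB with hu | hu
  · have : u = t1 := huniq u (Finset.mem_inter.1 hu).2 hsu
    exact ht1F2 (this ▸ (Finset.mem_inter.1 hu).1)
  · have : u = t1 := ht1uniq u ⟨(Finset.mem_sdiff.1 hu).1, hsu⟩
    exact (Finset.mem_sdiff.1 hu).2 (this ▸ ht1S1)
end
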